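/- Let G be a finite directed graph and let s_1,…,s_ℓ, t_1,…,t_ℓ ∈ V(G). Let G' be the directed graph obtained from G by adding, for every pair of indices 1 ≤ i ≤ j ≤ ℓ, a new red arc (t_j, s_i); the arcs of G are not red. Then for every Z ⊆ E(G): the graph G' − Z contains a closed directed walk using a red arc if and only if there exist indices 1 ≤ i ≤ j ≤ ℓ such that G − Z contains a directed path from s_i to t_j. -/

import Mathlib

/-!
STATEMENT 1: Let `G` be a finite digraph with arc set `E` and `s₁,…,s_n, t₁,…,t_n`
vertices.  Let `G'` be obtained from `G` by adding for all `1 ≤ i ≤ j ≤ n` a new red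
arc `(t_j, s_i)` (the arcs of `G` are not red).  Then for every `Z ⊆ E`:
`G' − Z` contains a closed directed walk using a red arc iff there are `i ≤ j` such
that `G − Z` contains a directed path from `s_i` to `t_j`.
-/

variable {V : Type*}

/-- Directed reachability (existence of a directed path/walk) along arcs of `E`. -/
def dReach (E : Set (V × V)) : V → V → Prop :=
  Relation.ReflTransGen fun a b => (a, b) ∈ E

/-- A directed walk in the digraph with arc set `E`, encoded as a nonempty list of
vertices in which consecutive vertices are joined by an arc of `E`. -/
def IsDWalk (E : Set (V × V)) (l : List V) : Prop :=
  l ≠ [] ∧ l.Chain' fun a b => (a, b) ∈ E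

/-- A chain gives reachability from its start to its last element. -/
lemma reach_of_chain {r : V → V → Prop} {x y : V} {l : List V}
    (hc : List.Chain r x l) (hy : (x :: l).getLast? = some y) :
    Relation.ReflTransGen r x y := by
  rw [List.getLast?_eq_getLast_of_ne_nil (List.cons_ne_nil _ _), Option.some.injEq] at hy
  exact List.relationReflTransGen_of_exists_isChain_cons l hc hy

/-- A chain gives reachability from head to last, option version. -/
lemma chain'_reach {r : V → V → Prop} : ∀ {l : List V}, l.Chain' r →
    ∀ {x y : V}, l.head? = some x → l.getLast? = some y → Relation.ReflTransGen r x y := by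
  intro l hl x y hx hy
  cases l with
  | nil => simp at hx
  | cons a l' =>
    simp only [List.head?_cons, Option.some.injEq] at hx
    subst hx
    exact reach_of_chain hl hy

/-- Split a chain at the first arc lying in `R`. -/
lemma split_first (F D R : Set (V × V)) (hFD : ∀ p ∈ F, p ∉ R → p ∈ D) :
    ∀ (l : List V) (x : V), List.Chain (fun a b => (a, b) ∈ F) x l →
      List.Chain (fun a b => (a, b) ∈ D) x l ∨
      ∃ l1 u l2, l = l1 ++ u :: l2 ∧ List.Chain (fun a b => (a, b) ∈ D) x l1 ∧
        ((x :: l1).getLast (List.cons_ne_nil _ _), u) ∈ R ∧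
        List.Chain (fun a b => (a, b) ∈ F) u l2 := by
  intro l
  induction l with
  | nil => intro x _; exact Or.inl List.Chain.nil
  | cons v l' ih =>
    intro x hc
    rw [List.Chain, List.isChain_cons_cons] at hc
    obtain ⟨hxv, hc'⟩ := hc
    by_cases hR : (x, v) ∈ R
    · exact Or.inr ⟨[], v, l', by simp, List.Chain.nil, by simpa using hR, hc'⟩
    · have hxvD : (x, v) ∈ D := hFD _ hxv hR
      rcases ih v hc' with h | ⟨l1, u, l2, hdec, hD, hRed, hF⟩
      · exact Or.inl (List.Chain.cons hxvD h)
      · refine Or.inr ⟨v :: l1, u, l2, by simp [hdec], List.Chain.cons hxvD hD, ?_, hF⟩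
        simpa [List.getLast_cons (List.cons_ne_nil v l1)] using hRed

lemma red_elim (E : Set (V × V)) (n : ℕ) (s t : Fin n → V)
    (Red : Set (V × V)) (hRed : Red = {p | ∃ i j : Fin n, i ≤ j ∧ p = (t j, s i)})
    (Z : Set (V × V)) :
    ∀ (k : ℕ) (i j : Fin n), i.val ≤ k → i ≤ j →
      ∀ l : List V, List.Chain (fun a b => (a, b) ∈ (E ∪ Red) \ Z) (s i) l →
      (s i :: l).getLast? = some (t j) →
      ∃ i' j' : Fin n, i' ≤ j' ∧ dReach (E \ Z) (s i') (t j') := by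
  intro k
  induction k using Nat.strong_induction_on with
  | _ k IH =>
    intro i j hik hij l hl hlast
    have hFD : ∀ p ∈ (E ∪ Red) \ Z, p ∉ Red → p ∈ E \ Z := by
      rintro p ⟨hp, hpz⟩ hpr
      exact ⟨hp.resolve_right hpr, hpz⟩
    rcases split_first ((E ∪ Red) \ Z) (E \ Z) Red hFD l (s i) hl with
      h | ⟨l1, u, l2, hdec, hD, hRarc, hF⟩
    · exact ⟨i, j, hij, reach_of_chain h hlast⟩
    · rw [hRed] at hRarc
      obtain ⟨i₀, j₀, hij₀, hp⟩ := hRarc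
      have hlast1 : (s i :: l1).getLast? = some (t j₀) := by
        rw [List.getLast?_eq_getLast_of_ne_nil (List.cons_ne_nil _ _)]
        exact congrArg some (congrArg Prod.fst hp)
      have hu : u = s i₀ := congrArg Prod.snd hp
      by_cases hle : i ≤ j₀
      · exact ⟨i, j₀, hle, reach_of_chain hD hlast1⟩
      · push_neg at hle
        have hi₀ : i₀ < i := lt_of_le_of_lt hij₀ hle
        have hlast2 : (s i₀ :: l2).getLast? = some (t j) := by
          rw [← hu]
          rw [hdec, show s i :: (l1 ++ u :: l2) = (s i :: l1) ++ (u :: l2) by simp,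
            List.getLast?_append_of_ne_nil _ (List.cons_ne_nil u l2)] at hlast
          exact hlast
        have hF' : List.Chain (fun a b => (a, b) ∈ (E ∪ Red) \ Z) (s i₀) l2 := hu ▸ hF
        exact IH i₀.val (lt_of_lt_of_le hi₀ hik) i₀ j le_rfl
          (le_trans (le_of_lt hi₀) hij) l2 hF' hlast2

theorem stmt_1 [Fintype V] (E : Set (V × V)) (n : ℕ) (s t : Fin n → V)
    (Red : Set (V × V)) (hRed : Red = {p | ∃ i j : Fin n, i ≤ j ∧ p = (t j, s i)})
    (hnew : ∀ p ∈ Red, p ∉ E)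
    (Z : Set (V × V)) (hZ : Z ⊆ E) :
    (∃ w : List V, IsDWalk ((E ∪ Red) \ Z) w ∧ w.head? = w.getLast? ∧
        ∃ a b : V, (a, b) ∈ Red ∧ ∃ w1 w2 : List V, w = w1 ++ a :: b :: w2) ↔
      ∃ i j : Fin n, i ≤ j ∧ dReach (E \ Z) (s i) (t j) := by
  constructor
  · rintro ⟨w, ⟨hw0, hwc⟩, hcl, a, b, hab, w1, w2, hw⟩
    -- first: reach from b to a inside (E ∪ Red) \ Z
    have hsplit : w = (w1 ++ [a]) ++ (b :: w2) := by simp [hw]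
    have h1 : (b :: w2).Chain' fun p q => (p, q) ∈ (E ∪ Red) \ Z :=
      hwc.suffix ⟨w1 ++ [a], hsplit.symm⟩
    have h2 : (w1 ++ [a]).Chain' fun p q => (p, q) ∈ (E ∪ Red) \ Z :=
      hwc.prefix ⟨b :: w2, hsplit.symm⟩
    have hwh : w.head? = (w1 ++ [a]).head? := by
      rw [hsplit, List.head?_append_of_ne_nil _ (by simp)]
    have hwl : w.getLast? = (b :: w2).getLast? := by
      rw [hsplit, List.getLast?_append_of_ne_nil _ (by simp)]
    obtain ⟨c, hc⟩ : ∃ c, (w1 ++ [a]).head? = some c := by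
      cases w1 <;> exact ⟨_, rfl⟩
    have r1 : Relation.ReflTransGen (fun p q => (p, q) ∈ (E ∪ Red) \ Z) b c := by
      refine chain'_reach h1 rfl ?_
      rw [← hwl, ← hcl, hwh, hc]
    have r2 : Relation.ReflTransGen (fun p q => (p, q) ∈ (E ∪ Red) \ Z) c a := by
      refine chain'_reach h2 hc ?_
      simp [List.getLast?_concat]
    have rba : Relation.ReflTransGen (fun p q => (p, q) ∈ (E ∪ Red) \ Z) b a := r1.trans r2
    rw [hRed] at hab
    obtain ⟨i, j, hij, hp⟩ := hab
    have ha : a = t j := congrArg Prod.fst hp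
    have hb : b = s i := congrArg Prod.snd hp
    rw [ha, hb] at rba
    obtain ⟨l, hlc, hll⟩ := List.exists_isChain_cons_of_relationReflTransGen rba
    have hll' : (s i :: l).getLast? = some (t j) := by
      rw [List.getLast?_eq_getLast_of_ne_nil (List.cons_ne_nil _ _)]
      exact congrArg some hll
    exact red_elim E n s t Red hRed Z i.val i j le_rfl hij l hlc hll'
  · rintro ⟨i, j, hij, hreach⟩
    obtain ⟨l, hlc, hll⟩ := List.exists_isChain_cons_of_relationReflTransGen hreach
    have hred : (t j, s i) ∈ Red := by rw [hRed]; exact ⟨i, j, hij, rfl⟩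
    have hredZ : (t j, s i) ∉ Z := fun h => hnew _ hred (hZ h)
    refine ⟨t j :: s i :: l, ⟨by simp, ?_⟩, ?_, t j, s i, hred, [], l, by simp⟩
    · show List.Chain (fun a b => (a, b) ∈ (E ∪ Red) \ Z) (t j) (s i :: l)
      refine List.Chain.cons ⟨Or.inr hred, hredZ⟩ ?_
      exact hlc.imp fun p q hpq => ⟨Or.inl hpq.1, hpq.2⟩
    · rw [List.getLast?_eq_getLast_of_ne_nil (List.cons_ne_nil _ _)]
      rw [List.getLast_cons (List.cons_ne_nil _ _), hll]
      rfl
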